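/- Define tournaments G_n inductively by G_1 = T_3 (the cyclic triangle) and G_{n+1} = T_3(G_n, G_n, G_n), the tournament obtained by substituting a copy of G_n for each vertex of the cyclic triangle. Then G_n has 3^n vertices, is U_5-free, and contains no transitive subtournament with more than 2^n vertices. -/

import Mathlib

/-- T_5. -/
def T5 (i j : Fin 5) : Prop :=
  (j.val + 5 - i.val) % 5 = 1 ∨ (j.val + 5 - i.val) % 5 = 2

/-- U_5: T_5 with the edge between v_1 and v_2 reversed, so v_2 → v_1. -/
def U5 (i j : Fin 5) : Prop :=
  if i = 0 ∧ j = 1 then False else if i = 1 ∧ j = 0 then True else T5 i j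

/-- The cyclic triangle T_3 on Fin 3. -/
def T3 (i j : Fin 3) : Prop := j = i + 1

/-- Vertex type of G_n: G_1 = T_3, G_{n+1} = T_3(G_n, G_n, G_n). -/
def GnV : ℕ → Type
  | 0 => PUnit
  | n + 1 => Fin 3 × GnV n

instance fintypeGnV : (n : ℕ) → Fintype (GnV n)
  | 0 => inferInstanceAs (Fintype PUnit)
  | n + 1 => letI := fintypeGnV n; inferInstanceAs (Fintype (Fin 3 × GnV n))

/-- Edge relation of G_n: within a copy, recurse; across copies, follow T_3. -/
def GnR : (n : ℕ) → GnV n → GnV n → Prop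
  | 0, _, _ => False
  | n + 1, (a, u), (b, v) => if a = b then GnR n u v else T3 a b

instance (i j : Fin 5) : Decidable (T5 i j) := by unfold T5; infer_instance
instance (i j : Fin 5) : Decidable (U5 i j) := by unfold U5; infer_instance
instance (i j : Fin 3) : Decidable (T3 i j) := by unfold T3; infer_instance

set_option maxRecDepth 10000 in
lemma P5 : ∀ g : Fin 5 → Fin 3,
    (∀ i j, U5 i j → g i ≠ g j → T3 (g i) (g j)) → ∀ i j, g i = g j := by decide

lemma GnR_succ (n : ℕ) (x y : GnV (n+1)) :
    GnR (n+1) x y ↔ (if x.1 = y.1 then GnR n x.2 y.2 else T3 x.1 y.1) := by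
  obtain ⟨a, u⟩ := x; obtain ⟨b, v⟩ := y; rfl

lemma card_Gn (n : ℕ) : Fintype.card (GnV n) = 3 ^ n := by
  induction n with
  | zero => rfl
  | succ n ih =>
    letI := fintypeGnV n
    have h : Fintype.card (GnV (n+1)) = Fintype.card (Fin 3 × GnV n) :=
      Fintype.card_congr (Equiv.refl _)
    rw [h, Fintype.card_prod, Fintype.card_fin, ih]; ring

lemma noU5 (n : ℕ) :
    ¬ ∃ f : Fin 5 → GnV n, Function.Injective f ∧ ∀ i j, U5 i j → GnR n (f i) (f j) := by
  induction n with
  | zero =>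
    rintro ⟨f, hinj, -⟩
    have h01 : (0 : Fin 5) = 1 := hinj rfl
    exact absurd h01 (by decide)
  | succ n ih =>
    rintro ⟨f, hinj, hedge⟩
    have hconst : ∀ i j, (f i).1 = (f j).1 := by
      apply P5
      intro i j hu hne
      have h := (GnR_succ n (f i) (f j)).mp (hedge i j hu)
      rwa [if_neg hne] at h
    apply ih
    refine ⟨fun i => (f i).2, ?_, ?_⟩
    · intro i j h
      exact hinj (Prod.ext (hconst i j) h)
    · intro i j hu
      have h := (GnR_succ n (f i) (f j)).mp (hedge i j hu)
      rwa [if_pos (hconst i j)] at h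

lemma transBound (n : ℕ) : ∀ S : Finset (GnV n),
    (∀ a ∈ S, ∀ b ∈ S, ∀ c ∈ S, ¬ (GnR n a b ∧ GnR n b c ∧ GnR n c a)) → S.card ≤ 2 ^ n := by
  induction n with
  | zero =>
    intro S _
    calc S.card ≤ Fintype.card (GnV 0) := S.card_le_univ
    _ = 1 := rfl
  | succ n ih =>
    intro S hS
    classical
    have key : ∀ a : Fin 3, (S.filter fun x => x.1 = a).card ≤ 2 ^ n := by
      intro a
      have himg : (S.filter fun x => x.1 = a).card
          = ((S.filter fun x => x.1 = a).image Prod.snd).card := by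
        refine (Finset.card_image_of_injOn ?_).symm
        intro x hx y hy hxy
        simp only [Finset.mem_coe, Finset.mem_filter] at hx hy
        exact Prod.ext (hx.2.trans hy.2.symm) hxy
      rw [himg]
      apply ih
      intro u hu v hv w hw hcyc
      obtain ⟨x, hx, hxu⟩ := Finset.mem_image.mp hu
      obtain ⟨y, hy, hyv⟩ := Finset.mem_image.mp hv
      obtain ⟨z, hz, hzw⟩ := Finset.mem_image.mp hw
      obtain ⟨hxS, hxa⟩ := Finset.mem_filter.mp hx
      obtain ⟨hyS, hya⟩ := Finset.mem_filter.mp hy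
      obtain ⟨hzS, hza⟩ := Finset.mem_filter.mp hz
      apply hS x hxS y hyS z hzS
      refine ⟨?_, ?_, ?_⟩
      · rw [GnR_succ n x y, if_pos (hxa.trans hya.symm), hxu, hyv]; exact hcyc.1
      · rw [GnR_succ n y z, if_pos (hya.trans hza.symm), hyv, hzw]; exact hcyc.2.1
      · rw [GnR_succ n z x, if_pos (hza.trans hxa.symm), hzw, hxu]; exact hcyc.2.2
    have hempty : ∃ a : Fin 3, (S.filter fun x => x.1 = a) = ∅ := by
      by_contra hcon
      push_neg at hcon
      obtain ⟨x, hx⟩ := hcon 0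
      obtain ⟨y, hy⟩ := hcon 1
      obtain ⟨z, hz⟩ := hcon 2
      replace hx := Finset.mem_filter.mp hx
      replace hy := Finset.mem_filter.mp hy
      replace hz := Finset.mem_filter.mp hz
      apply hS x hx.1 y hy.1 z hz.1
      refine ⟨?_, ?_, ?_⟩
      · rw [GnR_succ, hx.2, hy.2, if_neg (by decide)]; decide
      · rw [GnR_succ, hy.2, hz.2, if_neg (by decide)]; decide
      · rw [GnR_succ, hz.2, hx.2, if_neg (by decide)]; decide
    have hsum : S.card = ∑ a : Fin 3, (S.filter fun x => x.1 = a).card :=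
      Finset.card_eq_sum_card_fiberwise (fun x _ => Finset.mem_univ x.1)
    have c0 := key 0
    have c1 := key 1
    have c2 := key 2
    rw [hsum, Fin.sum_univ_three]
    have h2 : (2:ℕ)^(n+1) = 2^n + 2^n := by ring
    obtain ⟨a, ha⟩ := hempty
    have h0 : (S.filter fun x => x.1 = a).card = 0 := by rw [ha, Finset.card_empty]
    have hcase : a = 0 ∨ a = 1 ∨ a = 2 := by omega
    rcases hcase with h|h|h <;> rw [h] at h0 <;> omega

/-- G_n has 3^n vertices, is U_5-free, and has no transitive subtournament with
more than 2^n vertices. -/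
theorem Gn_properties (n : ℕ) (hn : 1 ≤ n) :
    Fintype.card (GnV n) = 3 ^ n ∧
    (¬ ∃ f : Fin 5 → GnV n, Function.Injective f ∧
        ∀ i j, U5 i j → GnR n (f i) (f j)) ∧
    ∀ S : Finset (GnV n), (∀ a ∈ S, ∀ b ∈ S, ∀ c ∈ S,
        ¬ (GnR n a b ∧ GnR n b c ∧ GnR n c a)) → S.card ≤ 2 ^ n := by
  exact ⟨card_Gn n, noU5 n, transBound n⟩
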